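/- Let α > 0, n ∈ ℕ, c ∈ ℝ, and define the operator 𝒟_c on functions f by (𝒟_c f)(z) = z·f'(z) + c·f(z). Let h_c^{(m)}(z) = 𝒟_c^m ((1+z)^{αn}). Then for all m ∈ ℕ₀, h_c^{(m)}(z) = ∑_{k=0}^{m} W_c(m,k) · (αn)_k · z^k · (1+z)^{αn−k}, where (s)_k = s(s−1)⋯(s−k+1) is the falling factorial and W_c(m,k) are the c-Whitney numbers of the second kind defined by W_c(m,0)=c^m, W_c(m,m)=1, W_c(m,k)=(k+c)W_c(m−1,k)+W_c(m−1,k−1). -/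

import Mathlib

/-- The `c`-Whitney numbers of the second kind. -/
noncomputable def whitney (c : ℝ) : ℕ → ℕ → ℝ
  | 0, k => if k = 0 then 1 else 0
  | (m + 1), k =>
      if k = 0 then c ^ (m + 1)
      else if k = m + 1 then 1
      else ((k : ℝ) + c) * whitney c m k + whitney c m (k - 1)

/-- The operator `𝒟_c f (z) = z f'(z) + c f(z)`. -/
noncomputable def fracD (c : ℝ) (f : ℝ → ℝ) : ℝ → ℝ :=
  fun z => z * deriv f z + c * f z

lemma whitney_eq_zero (c : ℝ) : ∀ m k, m < k → whitney c m k = 0 := by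
  intro m
  induction m with
  | zero => intro k hk; rw [whitney, if_neg (by omega)]
  | succ m ih =>
      intro k hk
      rw [whitney, if_neg (by omega), if_neg (by omega),
        ih k (by omega), ih (k - 1) (by omega)]
      ring

lemma whitney_diag (c : ℝ) : ∀ m, whitney c m m = 1 := by
  intro m
  cases m with
  | zero => rw [whitney]; simp
  | succ m => rw [whitney, if_neg (by omega), if_pos rfl]

lemma whitney_zero_right (c : ℝ) (m : ℕ) : whitney c m 0 = c ^ m := by
  cases m with
  | zero => rw [whitney]; simp
  | succ m => rw [whitney, if_pos rfl]

lemma whitney_succ (c : ℝ) (m k : ℕ) (hk : k ≠ 0) :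
    whitney c (m + 1) k = ((k : ℝ) + c) * whitney c m k + whitney c m (k - 1) := by
  rcases eq_or_ne k (m + 1) with rfl | h1
  · rw [whitney_diag, whitney_eq_zero c m (m+1) (by omega)]
    simp [whitney_diag]
  rcases lt_or_gt_of_ne h1 with h2 | h2
  · rw [whitney, if_neg hk, if_neg h1]
  · rw [whitney_eq_zero c (m+1) k (by omega), whitney_eq_zero c m k (by omega),
      whitney_eq_zero c m (k-1) (by omega)]
    ring


/-- Explicit representation of `h_c^{(m)} = 𝒟_c^m ((1+z)^{αn})` via the
`c`-Whitney numbers of the second kind and falling factorials, for real `z > -1`. -/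
theorem fracD_iterate_rpow (α : ℝ) (hα : 0 < α) (n : ℕ) (hn : 0 < n) (c : ℝ)
    (m : ℕ) (z : ℝ) (hz : -1 < z) :
    (fracD c)^[m] (fun w : ℝ => (1 + w) ^ (α * (n : ℝ))) z =
      ∑ k ∈ Finset.range (m + 1),
        whitney c m k * (descPochhammer ℝ k).eval (α * (n : ℝ)) * z ^ k *
          (1 + z) ^ (α * (n : ℝ) - (k : ℝ)) := by
  set a : ℝ := α * (n : ℝ) with ha
  set P : ℕ → ℝ := fun k => (descPochhammer ℝ k).eval a with hP
  have hPsucc : ∀ k : ℕ, P (k + 1) = P k * (a - k) := by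
    intro k
    simp [hP, descPochhammer_succ_right]
  induction m generalizing z with
  | zero =>
      simp [whitney, hP]
  | succ m ih =>
      have h1z : (0:ℝ) < 1 + z := by linarith
      rw [Function.iterate_succ_apply']
      have hev : (fracD c)^[m] (fun w : ℝ => (1 + w) ^ a) =ᶠ[nhds z]
          (fun w => ∑ k ∈ Finset.range (m + 1),
            (whitney c m k * P k) * (w ^ k * (1 + w) ^ (a - (k : ℝ)))) := by
        filter_upwards [Ioi_mem_nhds hz] with w hw
        rw [ih w hw]
        exact Finset.sum_congr rfl fun k _ => by ring
      have hD : HasDerivAt (fun w : ℝ => ∑ k ∈ Finset.range (m + 1),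
            (whitney c m k * P k) * (w ^ k * (1 + w) ^ (a - (k : ℝ))))
          (∑ k ∈ Finset.range (m + 1), (whitney c m k * P k) *
            ((k : ℝ) * z ^ (k - 1) * (1 + z) ^ (a - (k : ℝ)) +
              z ^ k * (1 * (a - (k : ℝ)) * (1 + z) ^ (a - (k : ℝ) - 1)))) z := by
        refine HasDerivAt.fun_sum fun k _ => ?_
        have hr : HasDerivAt (fun w : ℝ => (1 + w) ^ (a - (k : ℝ)))
            (1 * (a - (k : ℝ)) * (1 + z) ^ (a - (k : ℝ) - 1)) z :=
          ((hasDerivAt_id z).const_add 1).rpow_const (Or.inl h1z.ne')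
        exact ((hasDerivAt_pow k z).mul hr).const_mul _
      show z * deriv ((fracD c)^[m] (fun w : ℝ => (1 + w) ^ a)) z +
          c * (fracD c)^[m] (fun w : ℝ => (1 + w) ^ a) z = _
      rw [hev.deriv_eq, hD.deriv, ih z hz]
      -- now pure algebra
      set A : ℕ → ℝ := fun k =>
        ((k : ℝ) + c) * whitney c m k * P k * (z ^ k * (1 + z) ^ (a - (k : ℝ))) with hA
      set B : ℕ → ℝ := fun k =>
        whitney c m k * (P k * (a - (k : ℝ))) *
          (z ^ (k + 1) * (1 + z) ^ (a - ((k : ℝ) + 1))) with hB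
      have step1 : z * (∑ k ∈ Finset.range (m + 1), (whitney c m k * P k) *
            ((k : ℝ) * z ^ (k - 1) * (1 + z) ^ (a - (k : ℝ)) +
              z ^ k * (1 * (a - (k : ℝ)) * (1 + z) ^ (a - (k : ℝ) - 1)))) +
          c * (∑ k ∈ Finset.range (m + 1),
            whitney c m k * P k * z ^ k * (1 + z) ^ (a - (k : ℝ))) =
          ∑ k ∈ Finset.range (m + 1), (A k + B k) := by
        rw [Finset.mul_sum, Finset.mul_sum, ← Finset.sum_add_distrib]
        refine Finset.sum_congr rfl fun k _ => ?_
        have hzz : z * ((k : ℝ) * z ^ (k - 1)) = (k : ℝ) * z ^ k := by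
          cases k with
          | zero => simp
          | succ j => rw [Nat.add_sub_cancel]; push_cast; ring
        have hexp : a - ((k : ℝ) + 1) = a - (k : ℝ) - 1 := by ring
        simp only [hA, hB, hexp]
        rw [show z * ((whitney c m k * P k) *
            ((k : ℝ) * z ^ (k - 1) * (1 + z) ^ (a - (k : ℝ)) +
              z ^ k * (1 * (a - (k : ℝ)) * (1 + z) ^ (a - (k : ℝ) - 1)))) =
            (whitney c m k * P k) *
            ((z * ((k : ℝ) * z ^ (k - 1))) * (1 + z) ^ (a - (k : ℝ)) +
              (z * z ^ k) * ((a - (k : ℝ)) * (1 + z) ^ (a - (k : ℝ) - 1))) by ring,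
          hzz]
        rw [show z * z ^ k = z ^ (k + 1) by ring]
        ring
      rw [step1]
      -- sum manipulation
      have hAm : A (m + 1) = 0 := by
        simp [hA, whitney_eq_zero c m (m + 1) (by omega)]
      have hAsum : ∑ k ∈ Finset.range (m + 1), A k
          = A 0 + ∑ k ∈ Finset.range (m + 1), A (k + 1) := by
        have h1 : ∑ k ∈ Finset.range (m + 2), A k
            = ∑ k ∈ Finset.range (m + 1), A k := by
          rw [Finset.sum_range_succ, hAm, add_zero]
        have h2 : ∑ k ∈ Finset.range (m + 2), A k
            = ∑ k ∈ Finset.range (m + 1), A (k + 1) + A 0 :=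
          Finset.sum_range_succ' A (m + 1)
        rw [← h1, h2]; ring
      rw [Finset.sum_add_distrib, hAsum, Finset.sum_range_succ'
        (fun k => whitney c (m + 1) k * P k * z ^ k * (1 + z) ^ (a - (k : ℝ))) (m + 1)]
      rw [add_assoc, ← Finset.sum_add_distrib]
      have hzero : A 0 = whitney c (m + 1) 0 * P 0 * z ^ 0 * (1 + z) ^ (a - ((0:ℕ) : ℝ)) := by
        simp only [hA]
        rw [whitney_zero_right, whitney_zero_right]
        push_cast
        ring
      rw [hzero, add_comm (whitney c (m + 1) 0 * P 0 * z ^ 0 * (1 + z) ^ (a - ((0:ℕ):ℝ)))]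
      congr 1
      refine Finset.sum_congr rfl fun k _ => ?_
      simp only [hA, hB]
      rw [whitney_succ c m (k + 1) (by omega), Nat.add_sub_cancel, hPsucc]
      push_cast
      ring
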